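/- Let λ > 0, τ, σ, μ ∈ ℝ and T > 0. Suppose h₂, h₁, h₀ : [0,T] → ℝ are differentiable and satisfy, for all t ∈ [0,T]: h₂′(t) + (1 − h₂(t))²/λ − τ = 0; h₁′(t) + μh₂(t) − (1 − h₂(t))h₁(t)/λ = 0; h₀′(t) + (σ²/2)h₂(t) + μh₁(t) + h₁(t)²/(2λ) = 0; with h₂(T) = h₁(T) = h₀(T) = 0. Then V(t,z) := ½h₂(t)z² + h₁(t)z + h₀(t) satisfies V(T,z) = 0 for all z ∈ ℝ and the Hamilton–Jacobi–Bellman equation 0 = ∂ₜV(t,z) + (σ²/2)∂_{zz}V(t,z) + μ∂_zV(t,z) + (z − ∂_zV(t,z))²/(2λ) − (τ/2)z² for all (t,z) ∈ [0,T] × ℝ. -/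

import Mathlib

/-- verification that the quadratic ansatz
`V(t,z) = ½h₂(t)z² + h₁(t)z + h₀(t)` built from solutions of the Riccati system
solves the finite-horizon HJB equation
`0 = ∂ₜV + (σ²/2)∂_{zz}V + μ∂_zV + (z − ∂_zV)²/(2λ) − (τ/2)z²`
with terminal condition `V(T,·) = 0`. -/
theorem stmt14 (lam τ σ μ T : ℝ) (hlam : 0 < lam) (hT : 0 < T)
    (h₂ h₁ h₀ h₂' h₁' h₀' : ℝ → ℝ)
    (hd2 : ∀ t ∈ Set.Icc (0 : ℝ) T, HasDerivAt h₂ (h₂' t) t)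
    (hd1 : ∀ t ∈ Set.Icc (0 : ℝ) T, HasDerivAt h₁ (h₁' t) t)
    (hd0 : ∀ t ∈ Set.Icc (0 : ℝ) T, HasDerivAt h₀ (h₀' t) t)
    (ode2 : ∀ t ∈ Set.Icc (0 : ℝ) T, h₂' t + (1 - h₂ t) ^ 2 / lam - τ = 0)
    (ode1 : ∀ t ∈ Set.Icc (0 : ℝ) T,
      h₁' t + μ * h₂ t - (1 - h₂ t) * h₁ t / lam = 0)
    (ode0 : ∀ t ∈ Set.Icc (0 : ℝ) T,
      h₀' t + σ ^ 2 / 2 * h₂ t + μ * h₁ t + h₁ t ^ 2 / (2 * lam) = 0)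
    (hT2 : h₂ T = 0) (hT1 : h₁ T = 0) (hT0 : h₀ T = 0) :
    let V : ℝ → ℝ → ℝ := fun t z => (1 / 2) * h₂ t * z ^ 2 + h₁ t * z + h₀ t
    (∀ z : ℝ, V T z = 0) ∧
    ∀ t ∈ Set.Icc (0 : ℝ) T, ∀ z : ℝ,
      0 = deriv (fun s => V s z) t + σ ^ 2 / 2 * deriv (deriv (V t)) z
            + μ * deriv (V t) z + (z - deriv (V t) z) ^ 2 / (2 * lam)
            - τ / 2 * z ^ 2 := by
  intro V
  refine ⟨fun z => by simp [V, hT2, hT1, hT0], ?_⟩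
  intro t ht z
  -- time derivative
  have hdt : HasDerivAt (fun s => V s z)
      ((1 / 2) * h₂' t * z ^ 2 + h₁' t * z + h₀' t) t := by
    have := (((hd2 t ht).const_mul (1/2 : ℝ)).mul_const (z ^ 2)).add
      (((hd1 t ht).mul_const z).add (hd0 t ht))
    simpa [V, mul_comm, mul_assoc, add_assoc, Pi.add_def] using this
  -- space derivative
  have hdz : ∀ w : ℝ, HasDerivAt (V t) (h₂ t * w + h₁ t) w := by
    intro w
    have h1 : HasDerivAt (fun z : ℝ => (1 / 2) * h₂ t * z ^ 2)
        ((1 / 2) * h₂ t * (2 * w)) w := by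
      simpa using ((hasDerivAt_pow 2 w).const_mul ((1/2) * h₂ t))
    have h2 : HasDerivAt (fun z : ℝ => h₁ t * z) (h₁ t) w := by
      simpa using (hasDerivAt_id w).const_mul (h₁ t)
    have := (h1.add h2).add_const (h₀ t)
    simpa [V] using this.congr_deriv (by ring)
  have edz : deriv (V t) = fun w => h₂ t * w + h₁ t := funext fun w => (hdz w).deriv
  have hdzz : deriv (deriv (V t)) z = h₂ t := by
    rw [edz]
    have : HasDerivAt (fun w : ℝ => h₂ t * w + h₁ t) (h₂ t) z := by
      simpa using ((hasDerivAt_id z).const_mul (h₂ t)).add_const (h₁ t)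
    exact this.deriv
  rw [hdt.deriv, hdzz, edz]
  linear_combination (-(z ^ 2) / 2) * (ode2 t ht) + (-z) * (ode1 t ht)
    + (-1 : ℝ) * (ode0 t ht)
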